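/- Let (X,d) be a metric space, let H denote the Hamming distance on {0,1}^n, and let S ⊆ X be a subset of cardinality 2n such that any two distinct points of S are at distance at least ε > 0. Then there is a map f from {0,1}^n to the space of probability measures on X (equipped with the Wasserstein-1 distance W₁) such that W₁(f(a), f(b)) ≥ (ε/n)·H(a,b) for all a, b ∈ {0,1}^n. -/

import Mathlib

open MeasureTheory
open scoped ENNReal

noncomputable def wasserstein1 {X : Type*} [MetricSpace X] [MeasurableSpace X]
    (μ ν : Measure X) : ℝ :=
  sInf {c : ℝ | ∃ π : Measure (X × X), IsProbabilityMeasure π ∧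
    π.map Prod.fst = μ ∧ π.map Prod.snd = ν ∧ c = ∫ p, dist p.1 p.2 ∂π}

theorem stmt_12 {X : Type*} [MetricSpace X] [MeasurableSpace X] [BorelSpace X]
    (n : ℕ) (hn : 0 < n) (S : Finset X) (hcard : S.card = 2 * n)
    (ε : ℝ) (hε : 0 < ε)
    (hsep : ∀ x ∈ S, ∀ y ∈ S, x ≠ y → ε ≤ dist x y) :
    ∃ f : (Fin n → Bool) → Measure X,
      (∀ a, IsProbabilityMeasure (f a)) ∧
      ∀ a b : Fin n → Bool,
        (ε / n) * ((Finset.univ.filter fun i => a i ≠ b i).card : ℝ) ≤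
          wasserstein1 (f a) (f b) := by
  classical
  have hn0 : (n : ℝ≥0∞) ≠ 0 := by exact_mod_cast hn.ne'
  have hcardeq : Fintype.card (Fin n × Bool) = Fintype.card S := by
    simp [Fintype.card_coe, hcard]; ring
  let e : (Fin n × Bool) ≃ S := Fintype.equivOfCardEq hcardeq
  let x : (Fin n → Bool) → Fin n → X := fun a i => (e (i, a i) : X)
  have hxS : ∀ a i, x a i ∈ S := fun a i => (e (i, a i)).2
  have hxinj : ∀ (a b : Fin n → Bool) (i j : Fin n), x a i = x b j → (i, a i) = (j, b j) := by
    intro a b i j h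
    exact e.injective (Subtype.ext h)
  let μ : (Fin n → Bool) → Measure X := fun a =>
    (n : ℝ≥0∞)⁻¹ • ∑ i : Fin n, Measure.dirac (x a i)
  have hμapp : ∀ a (s : Set X),
      μ a s = (n : ℝ≥0∞)⁻¹ * ∑ i : Fin n, Measure.dirac (x a i) s := by
    intro a s
    simp [μ, Measure.finset_sum_apply]
  have hprob : ∀ a, IsProbabilityMeasure (μ a) := by
    intro a
    constructor
    rw [hμapp]
    simp [ENNReal.inv_mul_cancel hn0 (ENNReal.natCast_ne_top n)]
  have hsing : ∀ (a : Fin n → Bool) (i : Fin n), μ a {x a i} = (n : ℝ≥0∞)⁻¹ := by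
    intro a i
    rw [hμapp]
    rw [Finset.sum_eq_single i]
    · simp [Measure.dirac_apply]
    · intro j _ hj
      have : x a j ∉ ({x a i} : Set X) := by
        simp only [Set.mem_singleton_iff]
        intro h
        exact hj (congrArg Prod.fst (hxinj a a j i h))
      simp [Measure.dirac_apply, Set.indicator_apply, this]
    · simp
  have hsing0 : ∀ (a b : Fin n → Bool) (i : Fin n), a i ≠ b i → μ b {x a i} = 0 := by
    intro a b i hab
    rw [hμapp]
    rw [Finset.sum_eq_zero, mul_zero]
    intro j _
    have : x b j ∉ ({x a i} : Set X) := by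
      simp only [Set.mem_singleton_iff]
      intro h
      have h2 := hxinj b a j i h
      have : i = j := (congrArg Prod.fst h2).symm
      subst this
      exact hab ((congrArg Prod.snd h2).symm)
    simp [Measure.dirac_apply, Set.indicator_apply, this]
  have hScompl : ∀ a, μ a (↑S)ᶜ = 0 := by
    intro a
    rw [hμapp]
    rw [Finset.sum_eq_zero, mul_zero]
    intro j _
    have : x a j ∉ ((↑S : Set X))ᶜ := by simp [hxS a j]
    simp [Measure.dirac_apply, Set.indicator_apply, this]
  refine ⟨μ, hprob, ?_⟩
  intro a b
  haveI := hprob a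
  haveI := hprob b
  set K := Finset.univ.filter fun i => a i ≠ b i with hK
  obtain ⟨C, hC⟩ := Metric.isBounded_iff.mp S.finite_toSet.isBounded
  apply le_csInf
  · exact ⟨∫ p, dist p.1 p.2 ∂((μ a).prod (μ b)), (μ a).prod (μ b), inferInstance,
      Measure.fst_prod, Measure.snd_prod, rfl⟩
  rintro c ⟨π, hπ, hfst, hsnd, rfl⟩
  have hπfst : ∀ s : Set X, MeasurableSet s → π (Prod.fst ⁻¹' s) = μ a s := by
    intro s hs
    rw [← hfst, Measure.map_apply measurable_fst hs]
  have hπsnd : ∀ s : Set X, MeasurableSet s → π (Prod.snd ⁻¹' s) = μ b s := by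
    intro s hs
    rw [← hsnd, Measure.map_apply measurable_snd hs]
  -- π lives on S × S
  have hπT : π ((↑S ×ˢ ↑S : Set (X × X))ᶜ) = 0 := by
    rw [Set.compl_prod_eq_union]
    refine le_antisymm (le_trans (measure_union_le _ _) ?_) zero_le
    rw [Set.prod_univ, Set.univ_prod, hπfst _ S.finite_toSet.measurableSet.compl,
      hπsnd _ S.finite_toSet.measurableSet.compl, hScompl, hScompl, add_zero]
  have hae : ∀ᵐ p ∂π, (p : X × X) ∈ (↑S ×ˢ ↑S : Set (X × X)) := by
    rw [MeasureTheory.ae_iff]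
    have : {p : X × X | ¬ p ∈ (↑S ×ˢ ↑S : Set (X × X))} = (↑S ×ˢ ↑S : Set (X × X))ᶜ := rfl
    rw [this]; exact hπT
  -- the disjoint sets A i and their union D
  set A : Fin n → Set (X × X) := fun i => Prod.fst ⁻¹' {x a i} \ Prod.snd ⁻¹' {x a i} with hA
  have hAmeas : ∀ i, MeasurableSet (A i) :=
    fun i => ((measurableSet_singleton _).preimage measurable_fst).diff
      ((measurableSet_singleton _).preimage measurable_snd)
  set D : Set (X × X) := ⋃ i ∈ K, A i with hD
  have hDmeas : MeasurableSet D := K.measurableSet_biUnion fun i _ => hAmeas i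
  have hAdisj : (↑K : Set (Fin n)).PairwiseDisjoint A := by
    intro i _ j _ hij
    refine Set.disjoint_left.mpr ?_
    rintro ⟨p, q⟩ ⟨h1, _⟩ ⟨h3, _⟩
    simp only [Set.mem_preimage, Set.mem_singleton_iff] at h1 h3
    exact hij (congrArg Prod.fst (hxinj a a i j (h1.symm.trans h3)))
  have hAge : ∀ i ∈ K, (n : ℝ≥0∞)⁻¹ ≤ π (A i) := by
    intro i hi
    have hib : a i ≠ b i := by simpa [hK] using hi
    have h1 : π (Prod.fst ⁻¹' {x a i}) = (n : ℝ≥0∞)⁻¹ := by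
      rw [hπfst _ (measurableSet_singleton _), hsing]
    have h2 : π (Prod.snd ⁻¹' {x a i}) = 0 := by
      rw [hπsnd _ (measurableSet_singleton _), hsing0 a b i hib]
    calc (n : ℝ≥0∞)⁻¹ = π (Prod.fst ⁻¹' {x a i}) := h1.symm
      _ ≤ π (A i) + π (Prod.snd ⁻¹' {x a i}) := by
          rw [← measure_diff_add_inter _ ((measurableSet_singleton _).preimage measurable_snd)]
          exact add_le_add le_rfl (measure_mono Set.inter_subset_right)
      _ = π (A i) := by rw [h2, add_zero]
  have hπD : (K.card : ℝ≥0∞) * (n : ℝ≥0∞)⁻¹ ≤ π D := by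
    calc (K.card : ℝ≥0∞) * (n : ℝ≥0∞)⁻¹ = ∑ _i ∈ K, (n : ℝ≥0∞)⁻¹ := by
          simp [mul_comm]
      _ ≤ ∑ i ∈ K, π (A i) := Finset.sum_le_sum hAge
      _ = π D := (measure_biUnion_finset hAdisj fun i _ => hAmeas i).symm
  -- measurability of dist a.e.: compare with simple function g
  set g : X × X → ℝ := fun p => ∑ u ∈ S, ∑ v ∈ S,
    Set.indicator (({u} : Set X) ×ˢ ({v} : Set X)) (fun _ => dist u v) p with hg
  have hgmeas : Measurable g := by
    apply Finset.measurable_sum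
    intro u _
    apply Finset.measurable_sum
    intro v _
    exact measurable_const.indicator
      ((measurableSet_singleton u).prod (measurableSet_singleton v))
  have hgeq : ∀ p : X × X, p ∈ (↑S ×ˢ ↑S : Set (X × X)) → g p = dist p.1 p.2 := by
    rintro ⟨u0, v0⟩ ⟨hu0, hv0⟩
    simp only [hg]
    rw [Finset.sum_eq_single u0]
    · rw [Finset.sum_eq_single v0]
      · simp [Set.indicator_apply]
      · intro v _ hv
        simp [Set.indicator_apply, Set.mem_prod, hv.symm]
      · intro h; exact absurd hv0 h
    · intro u _ hu
      apply Finset.sum_eq_zero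
      intro v _
      simp [Set.indicator_apply, Set.mem_prod, hu.symm]
    · intro h; exact absurd hu0 h
  have hdist_ae : (fun p : X × X => dist p.1 p.2) =ᵐ[π] g :=
    hae.mono fun p hp => (hgeq p hp).symm
  have hmeas : AEStronglyMeasurable (fun p : X × X => dist p.1 p.2) π :=
    (hgmeas.aestronglyMeasurable).congr hdist_ae.symm
  have hbound : ∀ᵐ p ∂π, ‖dist (p : X × X).1 p.2‖ ≤ max C 0 := by
    refine hae.mono fun p hp => ?_
    obtain ⟨h1, h2⟩ := hp
    rw [Real.norm_eq_abs, abs_of_nonneg dist_nonneg]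
    exact le_trans (hC h1 h2) (le_max_left C 0)
  have hint : Integrable (fun p : X × X => dist p.1 p.2) π :=
    Integrable.mono' (integrable_const (max C 0)) hmeas hbound
  have hindle : ∀ᵐ p ∂π, D.indicator (fun _ => ε) p ≤ dist (p : X × X).1 p.2 := by
    refine hae.mono fun p hp => ?_
    obtain ⟨h1, h2⟩ := hp
    by_cases hd : p ∈ D
    · rw [Set.indicator_of_mem hd]
      obtain ⟨i, _, hpi⟩ := Set.mem_iUnion₂.mp hd
      obtain ⟨hpf, hps⟩ := hpi
      simp only [Set.mem_preimage, Set.mem_singleton_iff] at hpf hps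
      have hne : p.1 ≠ p.2 := by rw [hpf]; exact fun h => hps h.symm
      exact hsep _ h1 _ h2 hne
    · rw [Set.indicator_of_notMem hd]
      exact dist_nonneg
  have hindint : Integrable (D.indicator fun _ : X × X => ε) π :=
    (integrable_const ε).indicator hDmeas
  have hInt : ε * (π D).toReal ≤ ∫ p, dist p.1 p.2 ∂π := by
    have := integral_mono_ae hindint hint hindle
    rwa [integral_indicator_const ε hDmeas, smul_eq_mul, mul_comm] at this
  have hπDfin : π D ≠ ⊤ := measure_ne_top π D
  have hreal : (K.card : ℝ) / n ≤ (π D).toReal := by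
    have h := ENNReal.toReal_mono hπDfin hπD
    rw [ENNReal.toReal_mul, ENNReal.toReal_inv] at h
    rw [div_eq_mul_inv]
    convert h using 2 <;> simp
  calc ε / n * (K.card : ℝ) = ε * ((K.card : ℝ) / n) := by ring
    _ ≤ ε * (π D).toReal := mul_le_mul_of_nonneg_left hreal hε.le
    _ ≤ ∫ p, dist p.1 p.2 ∂π := hInt
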